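/- arXiv:2008.06379 — 7 statements merged into one kernel-verified Lean document; each statement's English description precedes it below -/
import Mathlib

section
/- Let G be a group with finite generating set A, let H be a subgroup of G, and let H' be a finite-index subgroup of H. Then the exponential growth rate of H with respect to A equals the exponential growth rate of H' with respect to A, i.e., limsup_{n→∞} (f_{H,A}(n))^{1/n} = limsup_{n→∞} (f_{H',A}(n))^{1/n}. -/
open Classical

/-- Evaluation in `G` of a word over the alphabet `A`. -/
def wordEval {G : Type} [Group G] {A : Type} (π : A → G) (w : List A) : G :=
  (w.map π).prod

/-- `π : A → G` generates `G` (positive words suffice; the generating set is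
assumed symmetric, see `SymmetricGen`). -/
def Generates {G : Type} [Group G] {A : Type} (π : A → G) : Prop :=
  ∀ g : G, ∃ w : List A, wordEval π w = g

/-- The generating set is symmetric: `A = A⁻¹`. -/
def SymmetricGen {G : Type} [Group G] {A : Type} (π : A → G) : Prop :=
  ∀ a : A, ∃ b : A, π b = (π a)⁻¹

/-- The word length of `g` with respect to the generating map `π`. -/
noncomputable def wordLength {G : Type} [Group G] {A : Type} (π : A → G) (g : G) : ℕ :=
  sInf {n : ℕ | ∃ w : List A, w.length = n ∧ wordEval π w = g}

/-- The word metric on `G` induced by the generating map `π`. -/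
noncomputable def wordDist {G : Type} [Group G] {A : Type} (π : A → G) (g h : G) : ℕ :=
  wordLength π (g⁻¹ * h)

/-- The growth function of the subgroup `H` with respect to `π`:
the number of elements of `H` of word length at most `n`. -/
noncomputable def growthFun {G : Type} [Group G] {A : Type} (π : A → G)
    (H : Subgroup G) (n : ℕ) : ℕ :=
  Set.ncard {g : G | g ∈ H ∧ wordLength π g ≤ n}

/-- The exponential growth rate of the subgroup `H` with respect to `π`. -/
noncomputable def growthRate {G : Type} [Group G] {A : Type} (π : A → G)
    (H : Subgroup G) : ℝ :=
  Filter.limsup (fun n : ℕ => (growthFun π H n : ℝ) ^ (1 / (n : ℝ))) Filter.atTop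


section Aux
variable {G : Type} [Group G] {A : Type}


lemma wordLength_spec (π : A → G) (hgen : Generates π) (g : G) :
    ∃ w : List A, w.length = wordLength π g ∧ wordEval π w = g := by
  have hne : {n : ℕ | ∃ w : List A, w.length = n ∧ wordEval π w = g}.Nonempty := by
    obtain ⟨w, hw⟩ := hgen g
    exact ⟨w.length, w, rfl, hw⟩
  exact Nat.sInf_mem hne

lemma wordLength_le (π : A → G) (w : List A) : wordLength π (wordEval π w) ≤ w.length :=
  Nat.sInf_le ⟨w, rfl, rfl⟩

lemma wordLength_one (π : A → G) : wordLength π (1 : G) = 0 :=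
  Nat.le_zero.mp (by simpa [wordEval] using wordLength_le π ([] : List A))

lemma wordLength_mul_le (π : A → G) (hgen : Generates π) (g h : G) :
    wordLength π (g * h) ≤ wordLength π g + wordLength π h := by
  obtain ⟨w₁, hl₁, he₁⟩ := wordLength_spec π hgen g
  obtain ⟨w₂, hl₂, he₂⟩ := wordLength_spec π hgen h
  have : wordEval π (w₁ ++ w₂) = g * h := by
    simp [wordEval, he₁.symm, he₂.symm]
  calc wordLength π (g * h) = wordLength π (wordEval π (w₁ ++ w₂)) := by rw [this]
    _ ≤ (w₁ ++ w₂).length := wordLength_le π _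
    _ = wordLength π g + wordLength π h := by simp [hl₁, hl₂]

lemma wordLength_inv_le (π : A → G) (hgen : Generates π) (hsym : SymmetricGen π) (g : G) :
    wordLength π g⁻¹ ≤ wordLength π g := by
  classical
  choose σ hσ using hsym
  obtain ⟨w, hl, he⟩ := wordLength_spec π hgen g
  have key : ∀ w : List A, wordEval π ((w.map σ).reverse) = (wordEval π w)⁻¹ := by
    intro w
    induction w with
    | nil => simp [wordEval]
    | cons a t ih =>
      simp only [wordEval, List.map_cons, List.reverse_cons, List.map_append, List.prod_append,
        List.map_reverse, List.map_map] at ih ⊢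
      simp [ih, hσ a, mul_inv_rev]
  have : wordEval π ((w.map σ).reverse) = g⁻¹ := by rw [key, he]
  calc wordLength π g⁻¹ = wordLength π (wordEval π ((w.map σ).reverse)) := by rw [this]
    _ ≤ ((w.map σ).reverse).length := wordLength_le π _
    _ = wordLength π g := by simp [hl]

-- finiteness and cardinality of balls
lemma ball_inj (π : A → G) (hgen : Generates π) (n : ℕ) :
    ∃ f : {g : G // wordLength π g ≤ n} → (Fin n → Option A), Function.Injective f := by
  classical
  refine ⟨fun g => fun i => (Classical.choose (wordLength_spec π hgen g.1))[(i:ℕ)]?, ?_⟩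
  intro g₁ g₂ hgg
  have hs₁ := Classical.choose_spec (wordLength_spec π hgen g₁.1)
  have hs₂ := Classical.choose_spec (wordLength_spec π hgen g₂.1)
  set w₁ := Classical.choose (wordLength_spec π hgen g₁.1) with hw₁
  set w₂ := Classical.choose (wordLength_spec π hgen g₂.1) with hw₂
  obtain ⟨hl₁, he₁⟩ := hs₁
  obtain ⟨hl₂, he₂⟩ := hs₂
  have hweq : w₁ = w₂ := by
    apply List.ext_getElem?
    intro m
    by_cases hm : m < n
    · exact congrFun hgg ⟨m, hm⟩
    · rw [List.getElem?_eq_none, List.getElem?_eq_none]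
      · exact le_trans (hl₂.le.trans g₂.2) (not_lt.mp hm)
      · exact le_trans (hl₁.le.trans g₁.2) (not_lt.mp hm)
  have : g₁.1 = g₂.1 := by rw [← he₁, ← he₂, hweq]
  exact Subtype.ext this

lemma ball_finite (π : A → G) [Fintype A] (hgen : Generates π) (n : ℕ) :
    {g : G | wordLength π g ≤ n}.Finite := by
  obtain ⟨f, hf⟩ := ball_inj π hgen n
  rw [← Set.finite_coe_iff]
  exact Finite.of_injective f hf

lemma ball_card_le (π : A → G) [Fintype A] (hgen : Generates π) (n : ℕ) :
    Set.ncard {g : G | wordLength π g ≤ n} ≤ (Fintype.card A + 1) ^ n := by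
  obtain ⟨f, hf⟩ := ball_inj π hgen n
  have h1 : Nat.card {g : G // wordLength π g ≤ n} ≤ Nat.card (Fin n → Option A) :=
    Nat.card_le_card_of_injective f hf
  have h2 : Nat.card (Fin n → Option A) = (Fintype.card A + 1) ^ n := by
    rw [Nat.card_eq_fintype_card, Fintype.card_fun]
    simp
  calc Set.ncard {g : G | wordLength π g ≤ n} = Nat.card {g : G // wordLength π g ≤ n} :=
        (Nat.card_coe_set_eq _).symm
    _ ≤ (Fintype.card A + 1) ^ n := h2 ▸ h1

lemma growthFun_pos (π : A → G) [Fintype A] (hgen : Generates π) (H : Subgroup G) (n : ℕ) :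
    1 ≤ growthFun π H n := by
  have hfin : {g : G | g ∈ H ∧ wordLength π g ≤ n}.Finite :=
    (ball_finite π hgen n).subset (fun g hg => hg.2)
  have hne : (1:G) ∈ {g : G | g ∈ H ∧ wordLength π g ≤ n} :=
    ⟨H.one_mem, by rw [wordLength_one]; exact Nat.zero_le n⟩
  exact (Set.ncard_pos hfin).mpr ⟨1, hne⟩

lemma growthFun_le (π : A → G) [Fintype A] (hgen : Generates π) (H : Subgroup G) (n : ℕ) :
    growthFun π H n ≤ (Fintype.card A + 1) ^ n := by
  refine le_trans ?_ (ball_card_le π hgen n)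
  exact Set.ncard_le_ncard (fun g hg => hg.2) (ball_finite π hgen n)

lemma growthFun_mono (π : A → G) [Fintype A] (hgen : Generates π) {H H' : Subgroup G}
    (hle : H' ≤ H) (n : ℕ) : growthFun π H' n ≤ growthFun π H n := by
  refine Set.ncard_le_ncard (fun g hg => ⟨hle hg.1, hg.2⟩) ?_
  exact (ball_finite π hgen n).subset (fun g hg => hg.2)

lemma growthFun_le_index (π : A → G) [Fintype A] (hgen : Generates π) (hsym : SymmetricGen π)
    (H H' : Subgroup G) (hle : H' ≤ H) (hfi : (H'.subgroupOf H).FiniteIndex) :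
    ∃ C : ℕ, ∀ n : ℕ,
      growthFun π H n ≤ Nat.card (H ⧸ H'.subgroupOf H) * growthFun π H' (n + C) := by
  classical
  set K := H'.subgroupOf H with hK
  haveI : Finite (H ⧸ K) := by infer_instance
  obtain ⟨q₀, hq₀⟩ := Finite.exists_max (fun q : H ⧸ K => wordLength π ((Quotient.out q : H) : G))
  refine ⟨wordLength π ((Quotient.out q₀ : H) : G), fun n => ?_⟩
  set C := wordLength π ((Quotient.out q₀ : H) : G) with hC
  set S := {g : G | g ∈ H ∧ wordLength π g ≤ n} with hS
  set T := {g : G | g ∈ H' ∧ wordLength π g ≤ n + C} with hT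
  have hTfin : T.Finite := (ball_finite π hgen (n + C)).subset (fun g hg => hg.2)
  haveI : Finite ↥T := Set.finite_coe_iff.mpr hTfin
  have hmem : ∀ g : ↥S, ((Quotient.out (QuotientGroup.mk (s := K)
      (⟨g.1, g.2.1⟩ : H)) : H) : G)⁻¹ * g.1 ∈ T := by
    rintro ⟨g, hgH, hgn⟩
    set q : H ⧸ K := QuotientGroup.mk (⟨g, hgH⟩ : H) with hq
    set t : H := Quotient.out q with ht
    have hmk : (QuotientGroup.mk t : H ⧸ K) = QuotientGroup.mk (⟨g, hgH⟩ : H) := by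
      rw [ht, hq, QuotientGroup.out_eq']
    have hKmem : t⁻¹ * (⟨g, hgH⟩ : H) ∈ K := QuotientGroup.eq.mp hmk
    have hH' : ((t : G))⁻¹ * g ∈ H' := by
      have := Subgroup.mem_subgroupOf.mp hKmem
      simpa using this
    refine ⟨hH', ?_⟩
    have h1 : wordLength π ((t : G))⁻¹ ≤ C :=
      le_trans (wordLength_inv_le π hgen hsym _) (hq₀ q)
    calc wordLength π (((t : G))⁻¹ * g) ≤ wordLength π ((t : G))⁻¹ + wordLength π g :=
          wordLength_mul_le π hgen _ _
      _ ≤ C + n := Nat.add_le_add h1 hgn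
      _ = n + C := Nat.add_comm C n
  let Φ : ↥S → (H ⧸ K) × ↥T := fun g =>
    ⟨QuotientGroup.mk (⟨g.1, g.2.1⟩ : H),
     ⟨((Quotient.out (QuotientGroup.mk (s := K) (⟨g.1, g.2.1⟩ : H)) : H) : G)⁻¹ * g.1, hmem g⟩⟩
  have hΦinj : Function.Injective Φ := by
    rintro ⟨g₁, h₁⟩ ⟨g₂, h₂⟩ heq
    obtain ⟨e1, e2⟩ := Prod.mk.injEq .. ▸ heq
    have e2' : ((Quotient.out (QuotientGroup.mk (s := K) (⟨g₁, h₁.1⟩ : H)) : H) : G)⁻¹ * g₁ =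
        ((Quotient.out (QuotientGroup.mk (s := K) (⟨g₂, h₂.1⟩ : H)) : H) : G)⁻¹ * g₂ :=
      congrArg Subtype.val e2
    rw [e1] at e2'
    exact Subtype.ext (mul_left_cancel e2')
  calc growthFun π H n = Nat.card ↥S := (Nat.card_coe_set_eq _).symm
    _ ≤ Nat.card ((H ⧸ K) × ↥T) := Nat.card_le_card_of_injective Φ hΦinj
    _ = Nat.card (H ⧸ K) * Nat.card ↥T := Nat.card_prod _ _
    _ = Nat.card (H ⧸ K) * growthFun π H' (n + C) := by
        rw [Nat.card_coe_set_eq]; rfl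

end Aux

open Filter in


lemma aux_limsup_root_le (u v : ℕ → ℝ) (hu1 : ∀ n, 1 ≤ u n) (hv1 : ∀ n, 1 ≤ v n)
    (B : ℝ) (hB : 1 ≤ B) (hvB : ∀ n : ℕ, v n ≤ B ^ n)
    (D : ℝ) (hD : 1 ≤ D) (C : ℕ) (huv : ∀ n, u n ≤ D * v (n + C)) :
    Filter.limsup (fun n : ℕ => u n ^ (1 / (n : ℝ))) Filter.atTop ≤
      Filter.limsup (fun n : ℕ => v n ^ (1 / (n : ℝ))) Filter.atTop := by
  set a : ℕ → ℝ := fun n => u n ^ (1 / (n : ℝ)) with ha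
  set b : ℕ → ℝ := fun n => v n ^ (1 / (n : ℝ)) with hb
  have hinv : ∀ n : ℕ, (0:ℝ) ≤ 1 / (n : ℝ) := fun n => by positivity
  have ha1 : ∀ n, 1 ≤ a n := fun n => by
    have := Real.rpow_le_rpow (le_refl (0:ℝ) |>.trans zero_le_one) (hu1 n) (hinv n)
    simpa [ha, Real.one_rpow, one_div] using this
  have hb1 : ∀ n, 1 ≤ b n := fun n => by
    have := Real.rpow_le_rpow (le_refl (0:ℝ) |>.trans zero_le_one) (hv1 n) (hinv n)
    simpa [hb, Real.one_rpow, one_div] using this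
  have hbB : ∀ n, b n ≤ B := by
    intro n
    rcases Nat.eq_zero_or_pos n with hn | hn
    · subst hn; simpa [hb] using hB
    · have h0 : (0:ℝ) < (n:ℝ) := by exact_mod_cast hn
      have h1 : v n ^ (1 / (n:ℝ)) ≤ (B ^ n) ^ (1 / (n:ℝ)) :=
        Real.rpow_le_rpow (le_trans zero_le_one (hv1 n)) (hvB n) (hinv n)
      have h2 : ((B ^ n : ℝ)) ^ (1 / (n:ℝ)) = B := by
        rw [← Real.rpow_natCast B n, ← Real.rpow_mul (le_trans zero_le_one hB)]
        rw [mul_one_div, div_self (ne_of_gt h0), Real.rpow_one]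
      calc b n ≤ (B ^ n) ^ (1 / (n:ℝ)) := h1
        _ = B := h2
  have hbnd : IsBoundedUnder (· ≤ ·) atTop b := isBoundedUnder_of ⟨B, hbB⟩
  have hacobdd : IsCoboundedUnder (· ≤ ·) atTop a :=
    (isBoundedUnder_of ⟨1, fun n => ha1 n⟩ : IsBoundedUnder (· ≥ ·) atTop a).isCoboundedUnder_le
  set L : ℝ := Filter.limsup b Filter.atTop with hL
  refine le_of_forall_pos_le_add ?_
  intro ε hε
  have hL1 : (1:ℝ) ≤ L := le_limsup_of_frequently_le (Frequently.of_forall fun n => hb1 n) hbnd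
  have hLe : L < L + ε := by linarith
  have hev : ∀ᶠ n in atTop, b n < L + ε := eventually_lt_of_limsup_lt hLe hbnd
  -- get N
  rw [eventually_atTop] at hev
  obtain ⟨N, hN⟩ := hev
  have hLpos : (0:ℝ) < L + ε := by linarith
  -- v n ≤ (L+ε)^n for n ≥ max N 1
  have hvle : ∀ n, max N 1 ≤ n → v n ≤ (L + ε) ^ n := by
    intro n hn
    have hn1 : 1 ≤ n := le_trans (le_max_right N 1) hn
    have hnN : N ≤ n := le_trans (le_max_left N 1) hn
    have h0 : ((n:ℝ)) ≠ 0 := by exact_mod_cast Nat.one_le_iff_ne_zero.mp hn1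
    have hvn : (0:ℝ) ≤ v n := le_trans zero_le_one (hv1 n)
    have : v n = (b n) ^ n := by
      rw [hb]
      rw [← Real.rpow_natCast (v n ^ (1 / (n:ℝ))) n, ← Real.rpow_mul hvn]
      rw [one_div, inv_mul_cancel₀ h0, Real.rpow_one]
    rw [this]
    exact pow_le_pow_left₀ (le_trans zero_le_one (hb1 n)) (le_of_lt (hN n hnN)) n
  set E : ℝ := D * (L + ε) ^ C with hE
  have hE1 : (1:ℝ) ≤ E := by
    have h : (1:ℝ) ≤ (L + ε) ^ C := one_le_pow₀ (by linarith)
    nlinarith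
  have hEpos : (0:ℝ) < E := lt_of_lt_of_le zero_lt_one hE1
  -- a n ≤ E^(1/n) * (L+ε) eventually
  have haev : ∀ᶠ n in atTop, a n ≤ E ^ (1 / (n:ℝ)) * (L + ε) := by
    rw [eventually_atTop]
    refine ⟨max N 1, fun n hn => ?_⟩
    have hn1 : 1 ≤ n := le_trans (le_max_right N 1) hn
    have h0 : ((n:ℝ)) ≠ 0 := by exact_mod_cast Nat.one_le_iff_ne_zero.mp hn1
    have h1 : u n ≤ E * (L + ε) ^ n := by
      have h2 : v (n + C) ≤ (L + ε) ^ (n + C) := hvle (n + C) (le_trans hn (Nat.le_add_right n C))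
      have h3 : u n ≤ D * (L + ε) ^ (n + C) := le_trans (huv n) (by
        have := mul_le_mul_of_nonneg_left h2 (le_trans zero_le_one hD)
        linarith)
      calc u n ≤ D * (L + ε) ^ (n + C) := h3
        _ = E * (L + ε) ^ n := by rw [hE, pow_add]; ring
    have h4 : a n ≤ (E * (L + ε) ^ n) ^ (1 / (n:ℝ)) :=
      Real.rpow_le_rpow (le_trans zero_le_one (hu1 n)) h1 (hinv n)
    have h5 : (E * (L + ε) ^ n) ^ (1 / (n:ℝ)) = E ^ (1 / (n:ℝ)) * (L + ε) := by
      rw [Real.mul_rpow (le_of_lt hEpos) (pow_nonneg (le_of_lt hLpos) n)]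
      congr 1
      rw [← Real.rpow_natCast (L + ε) n, ← Real.rpow_mul (le_of_lt hLpos)]
      rw [mul_one_div, div_self h0, Real.rpow_one]
    rw [h5] at h4; exact h4
  have htend : Tendsto (fun n : ℕ => E ^ (1 / (n:ℝ)) * (L + ε)) atTop (nhds (L + ε)) := by
    have h1 : Tendsto (fun n : ℕ => E ^ (1 / (n:ℝ))) atTop (nhds 1) := by
      have := (tendsto_const_nhds (x := E) (f := atTop (α := ℕ))).rpow
        tendsto_one_div_atTop_nhds_zero_nat (Or.inl (ne_of_gt hEpos))
      simpa using this
    have := h1.mul_const (L + ε)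
    simpa using this
  calc Filter.limsup a atTop ≤ Filter.limsup (fun n : ℕ => E ^ (1 / (n:ℝ)) * (L + ε)) atTop :=
        limsup_le_limsup haev hacobdd htend.isBoundedUnder_le
    _ = L + ε := htend.limsup_eq


/-- If `H'` is a finite-index subgroup of `H ≤ G`, then the
growth rates of `H` and `H'` with respect to the finite generating set coincide. -/
theorem growthRate_eq_of_finiteIndex {G : Type} [Group G] {A : Type} [Fintype A]
    (π : A → G) (hgen : Generates π) (hsym : SymmetricGen π)
    (H H' : Subgroup G) (hle : H' ≤ H)
    (hfi : (H'.subgroupOf H).FiniteIndex) :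
    growthRate π H = growthRate π H' := by
  classical
  have hB : (1:ℝ) ≤ (Fintype.card A + 1 : ℝ) := by
    have : (0:ℝ) ≤ (Fintype.card A : ℝ) := by positivity
    linarith
  have hu1 : ∀ n, (1:ℝ) ≤ (growthFun π H n : ℝ) := fun n => by
    exact_mod_cast growthFun_pos π hgen H n
  have hv1 : ∀ n, (1:ℝ) ≤ (growthFun π H' n : ℝ) := fun n => by
    exact_mod_cast growthFun_pos π hgen H' n
  have huB : ∀ n : ℕ, (growthFun π H n : ℝ) ≤ (Fintype.card A + 1 : ℝ) ^ n := fun n => by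
    exact_mod_cast growthFun_le π hgen H n
  have hvB : ∀ n : ℕ, (growthFun π H' n : ℝ) ≤ (Fintype.card A + 1 : ℝ) ^ n := fun n => by
    exact_mod_cast growthFun_le π hgen H' n
  obtain ⟨C, hC⟩ := growthFun_le_index π hgen hsym H H' hle hfi
  haveI : Finite (H ⧸ H'.subgroupOf H) := by infer_instance
  set k := Nat.card (H ⧸ H'.subgroupOf H) with hk
  have hk1 : 1 ≤ k := Nat.card_pos
  apply le_antisymm
  · -- growthRate H ≤ growthRate H'
    refine aux_limsup_root_le _ _ hu1 hv1 (Fintype.card A + 1 : ℝ) hB hvB (k : ℝ)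
      (by exact_mod_cast hk1) C ?_
    intro n
    exact_mod_cast hC n
  · -- growthRate H' ≤ growthRate H
    refine aux_limsup_root_le _ _ hv1 hu1 (Fintype.card A + 1 : ℝ) hB huB 1 le_rfl 0 ?_
    intro n
    have := growthFun_mono π hgen hle (n + 0)
    simp only [one_mul]
    exact_mod_cast this
end

section
/- Let G be a group generated by a finite set A and let H be a subgroup of G. Suppose L is a regular language over A such that every word w ∈ L represents an element of H. If k is the number of states of a (pruned) finite state automaton accepting L in which every state lies on an accepting path, then for every w ∈ L and every prefix u of w, the group element represented by u lies within distance k of H in the word metric on G. -/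
open Classical

lemma exists_short_accept {A σ : Type} [Fintype σ] (M : DFA A σ) (s : σ) :
    ∀ n : ℕ, ∀ v : List A, v.length ≤ n → M.evalFrom s v ∈ M.accept →
      ∃ v' : List A, v'.length < Fintype.card σ ∧ M.evalFrom s v' ∈ M.accept := by
  intro n
  induction n with
  | zero =>
    intro v hv hacc
    by_cases hlen : v.length < Fintype.card σ
    · exact ⟨v, hlen, hacc⟩
    · -- card σ = 0 impossible since s : σ
      exact absurd (Fintype.card_pos_iff.2 ⟨s⟩) (by omega)
  | succ n ih =>
    intro v hv hacc
    by_cases hlen : v.length < Fintype.card σ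
    · exact ⟨v, hlen, hacc⟩
    · obtain ⟨q, a, b, c, hsplit, hab, hbne, hsa, hqb, hqc⟩ :=
        M.evalFrom_split (s := s) (t := M.evalFrom s v) (le_of_not_gt hlen) rfl
      have hbpos : 0 < b.length := List.length_pos_iff.2 hbne
      have hshort : (a ++ c).length ≤ n := by
        have : v.length = a.length + b.length + c.length := by
          rw [hsplit]; simp only [List.length_append, Nat.add_assoc]
        simp only [List.length_append]
        omega
      have hacc' : M.evalFrom s (a ++ c) ∈ M.accept := by
        rw [DFA.evalFrom_of_append, hsa, hqc]; exact hacc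
      exact ih (a ++ c) hshort hacc'

/-- If `L` is a regular language all of whose words represent
elements of `H`, accepted by a pruned automaton with `k` states, then every
prefix of a word of `L` represents an element within distance `k` of `H`. -/
theorem prefix_close_to_subgroup_of_pruned {G : Type} [Group G] {A : Type} [Fintype A]
    (π : A → G) (hgen : Generates π) (H : Subgroup G) (L : Language A)
    (hLH : ∀ w ∈ L, wordEval π w ∈ H)
    (σ : Type) [Fintype σ] (M : DFA A σ) (hacc : M.accepts = L)
    (hpruned : ∀ s : σ, ∃ u v : List A,
      M.evalFrom M.start u = s ∧ M.evalFrom s v ∈ M.accept)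
    (k : ℕ) (hk : k = Fintype.card σ) :
    ∀ w ∈ L, ∀ u : List A, u <+: w →
      ∃ h ∈ H, wordLength π ((wordEval π u)⁻¹ * h) ≤ k := by
  intro w hw u hu
  obtain ⟨t, rfl⟩ := hu
  have hwacc : M.evalFrom (M.evalFrom M.start u) t ∈ M.accept := by
    have hmem : (u ++ t) ∈ M.accepts := hacc ▸ hw
    rw [DFA.mem_accepts] at hmem
    rwa [DFA.eval, DFA.evalFrom_of_append] at hmem
  obtain ⟨v, hvlen, hvacc⟩ :=
    exists_short_accept M (M.evalFrom M.start u) t.length t le_rfl hwacc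
  have huv : (u ++ v) ∈ L := by
    rw [← hacc, DFA.mem_accepts]
    show M.evalFrom M.start (u ++ v) ∈ M.accept
    rw [DFA.evalFrom_of_append]; exact hvacc
  refine ⟨wordEval π (u ++ v), hLH _ huv, ?_⟩
  have heq : (wordEval π u)⁻¹ * wordEval π (u ++ v) = wordEval π v := by
    simp [wordEval]
  rw [heq]
  calc wordLength π (wordEval π v) ≤ v.length :=
        Nat.sInf_le ⟨v, rfl, rfl⟩
    _ ≤ k := by omega
end

section
/- Let G be a group generated by a finite set A, let H ≤ G be a subgroup, and let k ≥ 0. Then the language of all words w over A such that every prefix of w represents a group element within distance k of H (in the word metric on G) is a regular language. -/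
open Classical

lemma wordEval_append {G : Type} [Group G] {A : Type} (π : A → G) (w v : List A) :
    wordEval π (w ++ v) = wordEval π w * wordEval π v := by
  simp [wordEval]

lemma wordLength_le_iff {G : Type} [Group G] {A : Type} (π : A → G)
    (hgen : Generates π) (g : G) (k : ℕ) :
    wordLength π g ≤ k ↔ ∃ w : List A, w.length ≤ k ∧ wordEval π w = g := by
  constructor
  · intro h
    have hne : {n : ℕ | ∃ w : List A, w.length = n ∧ wordEval π w = g}.Nonempty := by
      obtain ⟨w, hw⟩ := hgen g
      exact ⟨w.length, w, rfl, hw⟩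
    obtain ⟨w, hw1, hw2⟩ := Nat.sInf_mem hne
    exact ⟨w, hw1 ▸ h, hw2⟩
  · rintro ⟨w, hw1, hw2⟩
    exact le_trans (Nat.sInf_le ⟨w, rfl, hw2⟩) hw1

lemma prefix_concat_iff' {A : Type} {u w : List A} {a : A} :
    u <+: w ++ [a] ↔ u <+: w ∨ u = w ++ [a] := by
  constructor
  · intro h
    rcases le_or_gt u.length w.length with hle | hlt
    · exact Or.inl (List.prefix_of_prefix_length_le h (List.prefix_append w [a]) hle)
    · right
      apply h.eq_of_length
      have := h.length_le
      simp only [List.length_append, List.length_singleton] at this ⊢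
      omega
  · rintro (h | rfl)
    · exact h.trans (List.prefix_append w [a])
    · exact List.prefix_refl _

/-- The language of all words over `A` all of whose prefixes
represent group elements within distance `k` of the subgroup `H` is regular. -/
theorem regular_prefixes_near_subgroup {G : Type} [Group G] {A : Type} [Fintype A]
    (π : A → G) (hgen : Generates π) (H : Subgroup G) (k : ℕ) :
    Language.IsRegular ({w : List A | ∀ u : List A, u <+: w →
      ∃ h ∈ H, wordLength π ((wordEval π u)⁻¹ * h) ≤ k} : Language A) := by
  classical
  -- The set of right cosets meeting the ball of radius `k`, as a subset of `G ⧸ H`.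
  set B : Set (G ⧸ H) := (fun g : G => (g : G ⧸ H)) '' {g | wordLength π g ≤ k} with hB
  have hBfin : B.Finite := by
    apply Set.Finite.image
    have hsub : {g : G | wordLength π g ≤ k} ⊆ wordEval π '' {w : List A | w.length ≤ k} := by
      intro g hg
      obtain ⟨w, hw1, hw2⟩ := (wordLength_le_iff π hgen g k).1 hg
      exact ⟨w, hw1, hw2⟩
    exact Set.Finite.subset (Set.Finite.image _ (List.finite_length_le A k)) hsub
  haveI : Fintype ↥B := hBfin.fintype
  -- membership in `B` of the class of `g⁻¹` is exactly the distance condition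
  have hBmem : ∀ g : G, ((g⁻¹ : G) : G ⧸ H) ∈ B ↔
      ∃ h ∈ H, wordLength π (g⁻¹ * h) ≤ k := by
    intro g
    constructor
    · rintro ⟨x, hx, hxg⟩
      refine ⟨g * x, ?_, ?_⟩
      · have : x⁻¹ * g⁻¹ ∈ H := QuotientGroup.eq.mp hxg
        have := inv_mem this
        simpa [mul_inv_rev] using this
      · simpa [← mul_assoc] using hx
    · rintro ⟨h, hh, hlen⟩
      refine ⟨g⁻¹ * h, hlen, ?_⟩
      apply QuotientGroup.eq.mpr
      simpa [mul_inv_rev, mul_assoc] using inv_mem hh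
  have hone : ((1 : G) : G ⧸ H) ∈ B := by
    refine ⟨1, ?_, rfl⟩
    have : (0 : ℕ) ∈ {n : ℕ | ∃ w : List A, w.length = n ∧ wordEval π w = (1 : G)} :=
      ⟨[], rfl, by simp [wordEval]⟩
    exact le_trans (Nat.sInf_le this) (Nat.zero_le k)
  -- the DFA
  set M : DFA A (Option ↥B) :=
    { step := fun s a => s.bind fun q =>
        if h : ((π a)⁻¹ • (q : G ⧸ H)) ∈ B then some ⟨_, h⟩ else none
      start := some ⟨((1 : G) : G ⧸ H), hone⟩
      accept := {s | s.isSome} } with hM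
  -- key invariant
  have key : ∀ w : List A,
      M.eval w = if h : ∀ u : List A, u <+: w → (((wordEval π u)⁻¹ : G) : G ⧸ H) ∈ B
        then some ⟨(((wordEval π w)⁻¹ : G) : G ⧸ H), h w (List.prefix_refl w)⟩
        else none := by
    intro w
    induction w using List.reverseRecOn with
    | nil =>
      rw [dif_pos]
      · simp only [DFA.eval, DFA.evalFrom, List.foldl_nil, hM]
        congr 1
        apply Subtype.ext
        simp [wordEval]
      · intro u hu
        have : u = [] := List.prefix_nil.mp hu
        subst this
        simpa [wordEval] using hone
    | append_singleton w a ih =>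
      have heval : M.eval (w ++ [a]) = M.step (M.eval w) a := by
        simp [DFA.eval, DFA.evalFrom]
      rw [heval, ih]
      by_cases hw : ∀ u : List A, u <+: w → (((wordEval π u)⁻¹ : G) : G ⧸ H) ∈ B
      · rw [dif_pos hw]
        have hsmul : (π a)⁻¹ • (((wordEval π w)⁻¹ : G) : G ⧸ H)
            = (((wordEval π (w ++ [a]))⁻¹ : G) : G ⧸ H) := by
          rw [MulAction.Quotient.smul_mk, wordEval_append]
          congr 1
          simp [wordEval, mul_inv_rev]
        by_cases hwa : (((wordEval π (w ++ [a]))⁻¹ : G) : G ⧸ H) ∈ B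
        · have hall : ∀ u : List A, u <+: w ++ [a] →
              (((wordEval π u)⁻¹ : G) : G ⧸ H) ∈ B := by
            intro u hu
            rcases prefix_concat_iff'.mp hu with h | rfl
            · exact hw u h
            · exact hwa
          rw [dif_pos hall]
          simp only [hM, Option.bind_some]
          rw [dif_pos (hsmul ▸ hwa)]
          congr 1
          exact Subtype.ext hsmul
        · have hnall : ¬ ∀ u : List A, u <+: w ++ [a] →
              (((wordEval π u)⁻¹ : G) : G ⧸ H) ∈ B := by
            intro hall
            exact hwa (hall _ (List.prefix_refl _))
          rw [dif_neg hnall]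
          simp only [hM, Option.bind_some]
          rw [dif_neg (hsmul ▸ hwa)]
      · rw [dif_neg hw]
        have hnall : ¬ ∀ u : List A, u <+: w ++ [a] →
            (((wordEval π u)⁻¹ : G) : G ⧸ H) ∈ B := by
          intro hall
          exact hw fun u hu => hall u (hu.trans (List.prefix_append w [a]))
        rw [dif_neg hnall]
        simp [hM]
  refine ⟨Option ↥B, inferInstance, M, ?_⟩
  ext w
  have hacc : w ∈ M.accepts ↔ (M.eval w).isSome := Iff.rfl
  rw [hacc, key w]
  constructor
  · intro h
    by_cases hw : ∀ u : List A, u <+: w → (((wordEval π u)⁻¹ : G) : G ⧸ H) ∈ B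
    · intro u hu
      exact (hBmem (wordEval π u)).mp (hw u hu)
    · rw [dif_neg hw] at h
      simp at h
  · intro h
    have hw : ∀ u : List A, u <+: w → (((wordEval π u)⁻¹ : G) : G ⧸ H) ∈ B := by
      intro u hu
      exact (hBmem (wordEval π u)).mpr (h u hu)
    rw [dif_pos hw]
    simp
end

section
/- Let X be a geodesic metric space and let α, β : [0,s] → X be geodesics with α(0) = β(0) and d(α(s), β(s)) ≤ 1. If α is M-Morse, then β is M'-Morse for a Morse gauge M' depending only on M. -/
open Classical

set_option maxHeartbeats 1000000

/-- A Morse gauge: a function `M : (k, c) ↦ M(k,c)`. -/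
def MorseGauge : Type := ℝ → ℝ → ℝ

/-- `q` is a `(k,c)`-quasi-geodesic on the interval `[a,b]`. -/
def IsQuasiGeodesicOn {X : Type} [MetricSpace X] (k c : ℝ) (q : ℝ → X) (a b : ℝ) : Prop :=
  ∀ s ∈ Set.Icc a b, ∀ t ∈ Set.Icc a b,
    (1 / k) * |s - t| - c ≤ dist (q s) (q t) ∧ dist (q s) (q t) ≤ k * |s - t| + c

/-- `γ` is a geodesic on the interval `[a,b]`. -/
def IsGeodesicOn {X : Type} [MetricSpace X] (γ : ℝ → X) (a b : ℝ) : Prop :=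
  ∀ s ∈ Set.Icc a b, ∀ t ∈ Set.Icc a b, dist (γ s) (γ t) = |s - t|

/-- `γ` (defined on `[a,b]`) is `M`-Morse: every `(k,c)`-quasi-geodesic with
endpoints on `γ` lies in the `M k c`-neighborhood of the subsegment of `γ`
between those endpoints. -/
def IsMorseOn {X : Type} [MetricSpace X] (M : MorseGauge) (γ : ℝ → X) (a b : ℝ) : Prop :=
  ∀ k c : ℝ, 1 ≤ k → 0 ≤ c →
    ∀ (q : ℝ → X) (a' b' s' t' : ℝ), a' ≤ b' →
      IsQuasiGeodesicOn k c q a' b' →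
      s' ∈ Set.Icc a b → t' ∈ Set.Icc a b → s' ≤ t' →
      q a' = γ s' → q b' = γ t' →
      ∀ u ∈ Set.Icc a' b', ∃ v ∈ Set.Icc s' t', dist (q u) (γ v) ≤ M k c

/-- `X` is a geodesic metric space. -/
def IsGeodesicSpace (X : Type) [MetricSpace X] : Prop :=
  ∀ x y : X, ∃ γ : ℝ → X, γ 0 = x ∧ γ (dist x y) = y ∧ IsGeodesicOn γ 0 (dist x y)

lemma qg_mono {X : Type} [MetricSpace X] {k c c' : ℝ} {q : ℝ → X} {a b : ℝ}
    (h : IsQuasiGeodesicOn k c q a b) (hcc : c ≤ c') :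
    IsQuasiGeodesicOn k c' q a b := by
  intro s hs t ht
  obtain ⟨h1, h2⟩ := h s hs t ht
  exact ⟨by linarith, by linarith⟩

lemma geodesicOn_qg {X : Type} [MetricSpace X] {γ : ℝ → X} {a b k c : ℝ}
    (h : IsGeodesicOn γ a b) (hk : 1 ≤ k) (hc : 0 ≤ c) :
    IsQuasiGeodesicOn k c γ a b := by
  intro s hs t ht
  rw [h s hs t ht]
  have hk0 : (0:ℝ) < k := by linarith
  have h1 : 1/k ≤ 1 := by rw [div_le_one hk0]; linarith
  have hk1 : 0 < 1/k := by positivity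
  have habs : 0 ≤ |s - t| := abs_nonneg _
  constructor
  · nlinarith
  · nlinarith

/-- Concatenation of a geodesic, a quasi-geodesic, and a geodesic. -/
lemma concat_qg {X : Type} [MetricSpace X] {k c : ℝ} (hk : 1 ≤ k) (hc : 0 ≤ c)
    {q g₁ g₂ : ℝ → X} {a b d₁ d₂ : ℝ} (hab : a ≤ b) (hd₁ : 0 ≤ d₁) (hd₂ : 0 ≤ d₂)
    (hq : IsQuasiGeodesicOn k c q a b)
    (hg₁ : IsGeodesicOn g₁ 0 d₁) (hg₂ : IsGeodesicOn g₂ 0 d₂)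
    (hj₁ : g₁ d₁ = q a) (hj₂ : g₂ 0 = q b) :
    IsQuasiGeodesicOn k (c + 2*(d₁+d₂))
      (fun u => if u < a then g₁ (u - (a - d₁)) else if u ≤ b then q u else g₂ (u - b))
      (a - d₁) (b + d₂) := by
  set Q : ℝ → X :=
    fun u => if u < a then g₁ (u - (a - d₁)) else if u ≤ b then q u else g₂ (u - b) with hQdef
  have hk0 : (0:ℝ) < k := by linarith
  have hkle : 1/k ≤ 1 := by rw [div_le_one hk0]; linarith
  have hkpos : 0 < 1/k := by positivity
  -- evaluation lemmas
  have hQ1 : ∀ u, a - d₁ ≤ u → u < a → Q u = g₁ (u - (a - d₁)) := by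
    intro u _ h2; simp only [hQdef, if_pos h2]
  have hQ2 : ∀ u, a ≤ u → u ≤ b → Q u = q u := by
    intro u h1 h2; simp only [hQdef, if_neg (not_lt.2 h1), if_pos h2]
  have hQ3 : ∀ u, b < u → Q u = g₂ (u - b) := by
    intro u h1
    have : ¬ u < a := by push_neg; linarith
    simp only [hQdef, if_neg this, if_neg (not_le.2 h1)]
  -- distance to junctions
  have hD1 : ∀ u, a - d₁ ≤ u → u < a → dist (Q u) (q a) = a - u := by
    intro u h1 h2
    rw [hQ1 u h1 h2, ← hj₁, hg₁ _ ⟨by linarith, by linarith⟩ d₁ ⟨hd₁, le_refl _⟩]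
    rw [abs_of_nonpos (by linarith)]; ring
  have hD2 : ∀ u, b < u → u ≤ b + d₂ → dist (q b) (Q u) = u - b := by
    intro u h1 h2
    rw [hQ3 u h1, ← hj₂, dist_comm, hg₂ _ ⟨by linarith, by linarith⟩ 0 ⟨le_refl _, hd₂⟩]
    rw [abs_of_nonneg (by linarith)]; ring
  have key : ∀ u ∈ Set.Icc (a - d₁) (b + d₂), ∀ v ∈ Set.Icc (a - d₁) (b + d₂), u ≤ v →
      1/k * |u - v| - (c + 2*(d₁+d₂)) ≤ dist (Q u) (Q v) ∧
      dist (Q u) (Q v) ≤ k * |u - v| + (c + 2*(d₁+d₂)) := by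
    rintro u ⟨hu1, hu2⟩ v ⟨hv1, hv2⟩ huv
    have habs : |u - v| = v - u := by
      rw [abs_sub_comm]; exact abs_of_nonneg (by linarith)
    rw [habs]
    have hdnn : (0:ℝ) ≤ dist (Q u) (Q v) := dist_nonneg
    rcases lt_or_ge u a with hua | hua
    · rcases lt_or_ge v a with hva | hva
      · -- both in g₁
        have : dist (Q u) (Q v) = v - u := by
          rw [hQ1 u hu1 hua, hQ1 v hv1 hva,
            hg₁ _ ⟨by linarith, by linarith⟩ _ ⟨by linarith, by linarith⟩,
            abs_of_nonpos (by linarith)]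
          ring
        rw [this]
        constructor <;> nlinarith
      · rcases le_or_gt v b with hvb | hvb
        · -- u in g₁, v in q
          have e1 := hD1 u hu1 hua
          have t1 : dist (q a) (Q v) ≤ dist (q a) (Q u) + dist (Q u) (Q v) := dist_triangle _ _ _
          have t2 : dist (Q u) (Q v) ≤ dist (Q u) (q a) + dist (q a) (Q v) := dist_triangle _ _ _
          rw [hQ2 v hva hvb] at t1 t2 ⊢
          obtain ⟨l1, l2⟩ := hq a ⟨le_refl _, hab⟩ v ⟨hva, hvb⟩
          rw [abs_of_nonpos (by linarith)] at l1 l2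
          rw [dist_comm (q a) (Q u)] at t1
          constructor <;> nlinarith
        · -- u in g₁, v in g₂
          have e1 := hD1 u hu1 hua
          have e2 := hD2 v hvb hv2
          obtain ⟨l1, l2⟩ := hq a ⟨le_refl _, hab⟩ b ⟨hab, le_refl _⟩
          rw [abs_of_nonpos (by linarith)] at l1 l2
          have t1 : dist (Q u) (Q v) ≤ dist (Q u) (q a) + dist (q a) (q b) + dist (q b) (Q v) :=
            dist_triangle4 _ _ _ _
          have t2 : dist (q a) (q b) ≤ dist (q a) (Q u) + dist (Q u) (Q v) + dist (Q v) (q b) :=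
            dist_triangle4 _ _ _ _
          rw [dist_comm (q a) (Q u), dist_comm (Q v) (q b)] at t2
          constructor <;> nlinarith
    · rcases le_or_gt u b with hub | hub
      · rcases le_or_gt v b with hvb | hvb
        · -- both in q
          rw [hQ2 u hua hub, hQ2 v (by linarith) hvb]
          obtain ⟨l1, l2⟩ := hq u ⟨hua, hub⟩ v ⟨by linarith, hvb⟩
          rw [abs_of_nonpos (by linarith)] at l1 l2
          constructor <;> nlinarith
        · -- u in q, v in g₂
          have e2 := hD2 v hvb hv2
          rw [hQ2 u hua hub]
          obtain ⟨l1, l2⟩ := hq u ⟨hua, hub⟩ b ⟨hab, le_refl _⟩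
          rw [abs_of_nonpos (by linarith)] at l1 l2
          have t1 : dist (q u) (Q v) ≤ dist (q u) (q b) + dist (q b) (Q v) := dist_triangle _ _ _
          have t2 : dist (q u) (q b) ≤ dist (q u) (Q v) + dist (Q v) (q b) := dist_triangle _ _ _
          rw [dist_comm (Q v) (q b)] at t2
          constructor <;> nlinarith
      · -- both in g₂
        have : dist (Q u) (Q v) = v - u := by
          rw [hQ3 u hub, hQ3 v (by linarith),
            hg₂ _ ⟨by linarith, by linarith⟩ _ ⟨by linarith, by linarith⟩,
            abs_of_nonpos (by linarith)]
          ring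
        rw [this]
        constructor <;> nlinarith
  intro u hu v hv
  rcases le_total u v with h | h
  · exact key u hu v hv h
  · obtain ⟨h1, h2⟩ := key v hv u hu h
    rw [dist_comm, abs_sub_comm]
    exact ⟨h1, h2⟩

/-- Fellow traveling: `β` stays within `2·max (M 1 2) 0` of `α` at each time. -/
lemma fellow_travel {X : Type} [MetricSpace X] (hX : IsGeodesicSpace X)
    {M : MorseGauge} {s : ℝ} {α β : ℝ → X} (hs : 0 ≤ s)
    (hα : IsGeodesicOn α 0 s) (hβ : IsGeodesicOn β 0 s)
    (h0 : α 0 = β 0) (h1 : dist (α s) (β s) ≤ 1) (hM : IsMorseOn M α 0 s) :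
    ∀ t ∈ Set.Icc (0:ℝ) s, dist (α t) (β t) ≤ 2 * max (M 1 2) 0 := by
  set m : ℝ := max (M 1 2) 0 with hmdef
  have hm0 : 0 ≤ m := le_max_right _ _
  obtain ⟨g₂, hg20, hg2e, hg2⟩ := hX (β s) (α s)
  set d : ℝ := dist (β s) (α s) with hddef
  have hd0 : 0 ≤ d := dist_nonneg
  have hd1 : d ≤ 1 := (hddef.trans (dist_comm _ _)).trans_le h1
  have hg1 : IsGeodesicOn (fun _ : ℝ => β 0) 0 0 := by
    rintro x ⟨hx1, hx2⟩ y ⟨hy1, hy2⟩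
    have hx : x = 0 := le_antisymm hx2 hx1
    have hy : y = 0 := le_antisymm hy2 hy1
    simp [hx, hy]
  have hqg : IsQuasiGeodesicOn 1 (0 + 2*(0+d))
      (fun u => if u < 0 then (fun _ : ℝ => β 0) (u - (0 - 0)) else if u ≤ s then β u else g₂ (u - s))
      (0 - 0) (s + d) :=
    concat_qg (le_refl 1) (le_refl 0) hs (le_refl 0) hd0
      (geodesicOn_qg hβ (le_refl 1) (le_refl 0)) hg1 hg2 rfl hg20
  set Q : ℝ → X :=
    fun u => if u < 0 then (fun _ : ℝ => β 0) (u - (0 - 0)) else if u ≤ s then β u else g₂ (u - s)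
    with hQdef
  have hqg2 : IsQuasiGeodesicOn 1 2 Q (0 - 0) (s + d) := qg_mono hqg (by linarith)
  rw [show (0:ℝ) - 0 = 0 by ring] at hqg2
  have hQt : ∀ t, 0 ≤ t → t ≤ s → Q t = β t := by
    intro t ht1 ht2
    simp only [hQdef, if_neg (not_lt.2 ht1), if_pos ht2]
  have hQ0 : Q 0 = α 0 := by rw [hQt 0 (le_refl 0) hs, h0]
  have hQe : Q (s + d) = α s := by
    rcases eq_or_lt_of_le hd0 with hd | hd
    · have hβα : β s = α s := by
        have : dist (β s) (α s) = 0 := hd.symm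
        exact dist_eq_zero.1 this
      rw [show s + d = s by rw [← hd]; ring, hQt s hs (le_refl s), hβα]
    · have h1 : ¬ (s + d < 0) := by push_neg; linarith
      have h2 : ¬ (s + d ≤ s) := by push_neg; linarith
      simp only [hQdef, if_neg h1, if_neg h2]
      rw [show s + d - s = d by ring, hg2e]
  have hmain := hM 1 2 (le_refl 1) (by norm_num) Q 0 (s + d) 0 s (by linarith) hqg2
    ⟨le_refl 0, hs⟩ ⟨hs, le_refl s⟩ hs hQ0 hQe
  rintro t ⟨ht1, ht2⟩
  obtain ⟨v, ⟨hv1, hv2⟩, hdv⟩ := hmain t ⟨ht1, by linarith⟩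
  rw [hQt t ht1 ht2] at hdv
  have hdvm : dist (β t) (α v) ≤ m := le_trans hdv (le_max_left _ _)
  -- |v - t| ≤ m
  have hαv : dist (α v) (α 0) = v := by
    rw [hα v ⟨hv1, hv2⟩ 0 ⟨le_refl 0, hs⟩, sub_zero, abs_of_nonneg hv1]
  have hβt : dist (β t) (β 0) = t := by
    rw [hβ t ⟨ht1, ht2⟩ 0 ⟨le_refl 0, hs⟩, sub_zero, abs_of_nonneg ht1]
  have habs : |dist (α v) (α 0) - dist (β t) (α 0)| ≤ dist (α v) (β t) :=
    abs_dist_sub_le _ _ _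
  rw [hαv, h0, hβt, dist_comm (α v) (β t)] at habs
  have hvt : |v - t| ≤ m := le_trans habs hdvm
  have htv : dist (α t) (α v) = |t - v| := hα t ⟨ht1, ht2⟩ v ⟨hv1, hv2⟩
  calc dist (α t) (β t) ≤ dist (α t) (α v) + dist (α v) (β t) := dist_triangle _ _ _
    _ ≤ |t - v| + m := by rw [htv]; linarith [dist_comm (α v) (β t) ▸ hdvm]
    _ ≤ m + m := by rw [abs_sub_comm]; linarith
    _ = 2 * m := by ring

/-- There is a function `F` of Morse gauges such that in any
geodesic metric space, if `α, β : [0,s] → X` are geodesics with `α 0 = β 0`,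
`dist (α s) (β s) ≤ 1`, and `α` is `M`-Morse, then `β` is `F M`-Morse. -/
theorem morse_is_contagious :
    ∃ F : MorseGauge → MorseGauge,
      (∀ (M : MorseGauge) (k c : ℝ), M k c ≤ F M k c) ∧
      ∀ (X : Type) [MetricSpace X], IsGeodesicSpace X →
        ∀ (M : MorseGauge) (s : ℝ) (α β : ℝ → X), 0 ≤ s →
          IsGeodesicOn α 0 s → IsGeodesicOn β 0 s →
          α 0 = β 0 → dist (α s) (β s) ≤ 1 →
          IsMorseOn M α 0 s → IsMorseOn (F M) β 0 s := by
  refine ⟨fun M k c => max (M k c) (M k (c + 8 * max (M 1 2) 0) + 2 * max (M 1 2) 0),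
    fun M k c => le_max_left _ _, ?_⟩
  intro X _ hX M s α β hs hα hβ h0 h1 hMα
  set m : ℝ := max (M 1 2) 0 with hmdef
  have hm0 : (0:ℝ) ≤ m := le_max_right _ _
  have hft := fellow_travel hX hs hα hβ h0 h1 hMα
  intro k c hk hc q a' b' s' t' hab hq hs' ht' hst hqa hqb u hu
  obtain ⟨hs'1, hs'2⟩ := hs'
  obtain ⟨ht'1, ht'2⟩ := ht'
  -- geodesics connecting endpoints
  obtain ⟨g₁, hg10, hg1e, hg1⟩ := hX (α s') (β s')
  obtain ⟨g₂, hg20, hg2e, hg2⟩ := hX (β t') (α t')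
  set d₁ : ℝ := dist (α s') (β s') with hd1def
  set d₂ : ℝ := dist (β t') (α t') with hd2def
  have hd10 : 0 ≤ d₁ := dist_nonneg
  have hd20 : 0 ≤ d₂ := dist_nonneg
  have hd1m : d₁ ≤ 2 * m := hft s' ⟨hs'1, hs'2⟩
  have hd2m : d₂ ≤ 2 * m := (hd2def.trans (dist_comm _ _)).trans_le (hft t' ⟨ht'1, ht'2⟩)
  have hqg : IsQuasiGeodesicOn k (c + 2*(d₁+d₂))
      (fun u => if u < a' then g₁ (u - (a' - d₁)) else if u ≤ b' then q u else g₂ (u - b'))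
      (a' - d₁) (b' + d₂) :=
    concat_qg hk hc hab hd10 hd20 hq hg1 hg2 (by rw [hg1e, hqa]) (by rw [hg20, hqb])
  set Q : ℝ → X :=
    fun u => if u < a' then g₁ (u - (a' - d₁)) else if u ≤ b' then q u else g₂ (u - b')
    with hQdef
  have hqg2 : IsQuasiGeodesicOn k (c + 8 * m) Q (a' - d₁) (b' + d₂) :=
    qg_mono hqg (by linarith)
  have hQmid : ∀ w, a' ≤ w → w ≤ b' → Q w = q w := by
    intro w h1 h2
    simp only [hQdef, if_neg (not_lt.2 h1), if_pos h2]
  have hQa : Q (a' - d₁) = α s' := by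
    rcases eq_or_lt_of_le hd10 with hd | hd
    · have hz : dist (α s') (β s') = 0 := by rw [← hd1def]; exact hd.symm
      have : β s' = α s' := (dist_eq_zero.1 hz).symm
      rw [show a' - d₁ = a' by rw [← hd]; ring, hQmid a' (le_refl _) hab, hqa, this]
    · have h1 : a' - d₁ < a' := by linarith
      simp only [hQdef, if_pos h1]
      rw [show a' - d₁ - (a' - d₁) = 0 by ring, hg10]
  have hQb : Q (b' + d₂) = α t' := by
    rcases eq_or_lt_of_le hd20 with hd | hd
    · have : β t' = α t' := dist_eq_zero.1 hd.symm
      rw [show b' + d₂ = b' by rw [← hd]; ring, hQmid b' hab (le_refl _), hqb, this]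
    · have h1 : ¬ (b' + d₂ < a') := by push_neg; linarith
      have h2 : ¬ (b' + d₂ ≤ b') := by push_neg; linarith
      simp only [hQdef, if_neg h1, if_neg h2]
      rw [show b' + d₂ - b' = d₂ by ring, hg2e]
  have hmain := hMα k (c + 8 * m) hk (by linarith) Q (a' - d₁) (b' + d₂) s' t'
    (by linarith) hqg2 ⟨hs'1, hs'2⟩ ⟨ht'1, ht'2⟩ hst hQa hQb
  obtain ⟨hu1, hu2⟩ := hu
  obtain ⟨v, ⟨hv1, hv2⟩, hdv⟩ := hmain u ⟨by linarith, by linarith⟩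
  rw [hQmid u hu1 hu2] at hdv
  refine ⟨v, ⟨hv1, hv2⟩, ?_⟩
  have hαβv : dist (α v) (β v) ≤ 2 * m := hft v ⟨by linarith, by linarith⟩
  calc dist (q u) (β v) ≤ dist (q u) (α v) + dist (α v) (β v) := dist_triangle _ _ _
    _ ≤ M k (c + 8 * m) + 2 * m := by linarith
    _ ≤ max (M k c) (M k (c + 8 * m) + 2 * m) := le_max_right _ _
end

section
/- Let X be a geodesic metric space, M a Morse gauge, and α, β : [0,s] → X two M-Morse geodesics with α(0) = β(0). If d(α(r), β) < K for some r ∈ [0,s] and K > 0, then d(α(t), β(t)) ≤ 8·M(3,0) for all t < r − K − 4·M(3,0). In particular, if α(s) = β(s), then d(α(t), β(t)) ≤ 12·M(3,0) for all t ∈ [0,s]. -/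
open Classical

lemma morse_nonneg {X : Type} [MetricSpace X] (M : MorseGauge) (γ : ℝ → X)
    (s : ℝ) (hs : 0 ≤ s) (hM : IsMorseOn M γ 0 s) : 0 ≤ M 3 0 := by
  obtain ⟨v, hv, hd⟩ := hM 3 0 (by norm_num) le_rfl (fun _ => γ 0) 0 0 0 0 le_rfl
    (by
      intro a ha b hb
      simp only [Set.mem_Icc] at ha hb
      have : a = b := by linarith [ha.1, ha.2, hb.1, hb.2]
      subst this
      simp)
    ⟨le_rfl, hs⟩ ⟨le_rfl, hs⟩ le_rfl rfl rfl 0 ⟨le_rfl, le_rfl⟩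
  have hv0 : v = 0 := le_antisymm hv.2 hv.1
  subst hv0
  simpa using hd

/-- Core lemma: if `p` realizes the distance from `α r` to `β` on `[0,s]`,
then `α` and `β` 2·M(3,0)-fellow-travel up to time `p`. -/
lemma core_lemma {X : Type} [MetricSpace X] (hX : IsGeodesicSpace X)
    (M : MorseGauge) (s : ℝ) (hs : 0 ≤ s) (α β : ℝ → X)
    (hα : IsGeodesicOn α 0 s) (hβ : IsGeodesicOn β 0 s)
    (hαM : IsMorseOn M α 0 s) (h0 : α 0 = β 0)
    (r p : ℝ) (hr : r ∈ Set.Icc 0 s) (hp : p ∈ Set.Icc 0 s)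
    (hmin : ∀ x ∈ Set.Icc 0 s, dist (α r) (β p) ≤ dist (α r) (β x))
    (t : ℝ) (ht0 : 0 ≤ t) (htp : t ≤ p) :
    dist (α t) (β t) ≤ 2 * M 3 0 := by
  obtain ⟨σ, hσ0, hσd, hσ⟩ := hX (β p) (α r)
  set d : ℝ := dist (β p) (α r) with hd_def
  have hd0 : 0 ≤ d := dist_nonneg
  set q : ℝ → X := fun x => if x ≤ p then β x else σ (x - p) with hq_def
  have hqβ : ∀ x, x ≤ p → q x = β x := by
    intro x hx; simp [q, hx]
  have hqσ : ∀ x, p ≤ x → q x = σ (x - p) := by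
    intro x hx
    by_cases h : x ≤ p
    · have hxp : x = p := le_antisymm h hx
      subst hxp
      simp [q, hσ0]
    · simp [q, h]
  -- distance formulas
  have hβd : ∀ a ∈ Set.Icc (0:ℝ) p, ∀ b ∈ Set.Icc (0:ℝ) p, dist (β a) (β b) = |a - b| := by
    intro a ha b hb
    exact hβ a ⟨ha.1, ha.2.trans hp.2⟩ b ⟨hb.1, hb.2.trans hp.2⟩
  -- QG for ordered pairs
  have key : ∀ s₁ ∈ Set.Icc (0:ℝ) (p + d), ∀ t₁ ∈ Set.Icc (0:ℝ) (p + d), s₁ ≤ t₁ →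
      (1/3 : ℝ) * |s₁ - t₁| - 0 ≤ dist (q s₁) (q t₁) ∧
        dist (q s₁) (q t₁) ≤ 3 * |s₁ - t₁| + 0 := by
    intro s₁ hs₁ t₁ ht₁ hst
    have habs : |s₁ - t₁| = t₁ - s₁ := by
      rw [abs_of_nonpos (by linarith)]; ring
    by_cases h1 : t₁ ≤ p
    · -- both on β
      have hds : dist (q s₁) (q t₁) = |s₁ - t₁| := by
        rw [hqβ s₁ (hst.trans h1), hqβ t₁ h1]
        exact hβd s₁ ⟨hs₁.1, hst.trans h1⟩ t₁ ⟨ht₁.1, h1⟩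
      rw [hds]
      constructor <;> [skip; skip] <;> nlinarith [abs_nonneg (s₁ - t₁)]
    · push_neg at h1
      by_cases h2 : s₁ ≤ p
      · -- straddling
        set u : ℝ := p - s₁ with hu
        set v : ℝ := t₁ - p with hv
        have hv0 : 0 ≤ v := by simp [hv]; linarith
        have hvd : v ≤ d := by simp [hv]; linarith [ht₁.2]
        have hvI : v ∈ Set.Icc (0:ℝ) d := ⟨hv0, hvd⟩
        have h0I : (0:ℝ) ∈ Set.Icc (0:ℝ) d := ⟨le_rfl, hd0⟩
        have hdI : d ∈ Set.Icc (0:ℝ) d := ⟨hd0, le_rfl⟩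
        have hqs : q s₁ = β s₁ := hqβ s₁ h2
        have hqt : q t₁ = σ v := by rw [hqσ t₁ h1.le]
        have hσ0v : dist (σ 0) (σ v) = v := by
          rw [hσ 0 h0I v hvI, abs_of_nonpos (by linarith)]; ring
        have hσvd : dist (σ v) (σ d) = d - v := by
          rw [hσ v hvI d hdI, abs_of_nonpos (by linarith)]
          ring
        have hβsp : dist (β s₁) (β p) = u := by
          rw [hβd s₁ ⟨hs₁.1, h2⟩ p ⟨hp.1.trans (by linarith [hs₁.1]), le_rfl⟩,
            abs_of_nonpos (by simp [hu]; linarith)]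
          simp [hu]
        -- lower bound pieces
        have lb1 : u - v ≤ dist (q s₁) (q t₁) := by
          have := dist_triangle (β s₁) (σ v) (β p)
          have h' : dist (σ v) (β p) = v := by
            rw [← hσ0, dist_comm]; exact hσ0v
          rw [hqs, hqt]
          linarith [hβsp ▸ this, h']
        have lb2 : v ≤ dist (q s₁) (q t₁) := by
          have hmin' : d ≤ dist (α r) (β s₁) := by
            have := hmin s₁ ⟨hs₁.1, h2.trans hp.2⟩
            rw [hd_def, dist_comm (β p) (α r)]
            exact this
          have htri : dist (α r) (β s₁) ≤ dist (α r) (σ v) + dist (σ v) (β s₁) :=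
            dist_triangle _ _ _
          have hav : dist (α r) (σ v) = d - v := by
            rw [← hσd, dist_comm]; exact hσvd
          rw [hqs, hqt, dist_comm]
          linarith
        have ub : dist (q s₁) (q t₁) ≤ u + v := by
          have htri : dist (β s₁) (σ v) ≤ dist (β s₁) (β p) + dist (β p) (σ v) :=
            dist_triangle _ _ _
          have h' : dist (β p) (σ v) = v := by rw [← hσ0]; exact hσ0v
          rw [hqs, hqt]
          linarith
        have huv : u + v = t₁ - s₁ := by simp only [hu, hv]; ring
        rw [habs]
        constructor
        · linarith
        · linarith
      · -- both on σ
        push_neg at h2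
        have hqs : q s₁ = σ (s₁ - p) := hqσ s₁ h2.le
        have hqt : q t₁ = σ (t₁ - p) := hqσ t₁ h1.le
        have hds : dist (q s₁) (q t₁) = |s₁ - t₁| := by
          rw [hqs, hqt, hσ (s₁ - p) ⟨by linarith, by linarith [hs₁.2]⟩
            (t₁ - p) ⟨by linarith, by linarith [ht₁.2]⟩]
          ring_nf
        rw [hds]
        constructor <;> nlinarith [abs_nonneg (s₁ - t₁)]
  have hQG : IsQuasiGeodesicOn 3 0 q 0 (p + d) := by
    intro s₁ hs₁ t₁ ht₁
    rcases le_total s₁ t₁ with h | h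
    · exact key s₁ hs₁ t₁ ht₁ h
    · obtain ⟨h1, h2⟩ := key t₁ ht₁ s₁ hs₁ h
      rw [dist_comm, abs_sub_comm] at h1 h2
      exact ⟨h1, h2⟩
  have hq0 : q 0 = α 0 := by rw [hqβ 0 hp.1, h0]
  have hqe : q (p + d) = α r := by
    rw [hqσ (p + d) (by linarith)]
    simp [hσd]
  obtain ⟨v, hv, hdist⟩ := hαM 3 0 (by norm_num) le_rfl q 0 (p + d) 0 r
    (by linarith [hp.1]) hQG ⟨le_rfl, hs⟩ hr hr.1 hq0 hqe t ⟨ht0, by linarith⟩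
  rw [hqβ t htp] at hdist
  -- now conclude
  have hts : t ≤ s := htp.trans hp.2
  have hvs : v ∈ Set.Icc (0:ℝ) s := ⟨hv.1, hv.2.trans hr.2⟩
  have h0s : (0:ℝ) ∈ Set.Icc (0:ℝ) s := ⟨le_rfl, hs⟩
  have htI : t ∈ Set.Icc (0:ℝ) s := ⟨ht0, hts⟩
  have hαv : dist (α 0) (α v) = v := by
    rw [hα 0 h0s v hvs, abs_of_nonpos (by linarith [hv.1])]; ring
  have hβt : dist (β 0) (β t) = t := by
    rw [hβ 0 h0s t htI, abs_of_nonpos (by linarith)]; ring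
  have hαtv : dist (α t) (α v) = |t - v| := hα t htI v hvs
  have tri1 : dist (α 0) (α v) ≤ dist (α 0) (β t) + dist (β t) (α v) := dist_triangle _ _ _
  have tri2 : dist (β 0) (β t) ≤ dist (β 0) (α v) + dist (α v) (β t) := dist_triangle _ _ _
  have e1 : dist (α 0) (β t) = t := by rw [h0] at *; exact hβt
  have e2 : dist (β 0) (α v) = v := by rw [← h0]; exact hαv
  have e3 : dist (α v) (β t) = dist (β t) (α v) := dist_comm _ _
  have habs : |t - v| ≤ M 3 0 := by
    rw [abs_le]
    constructor <;> [skip; skip]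
    · linarith [hαv ▸ tri1, e1]
    · linarith [hβt ▸ tri2, e2, e3]
  calc dist (α t) (β t) ≤ dist (α t) (α v) + dist (α v) (β t) := dist_triangle _ _ _
    _ ≤ M 3 0 + M 3 0 := by
        rw [hαtv, e3]
        exact add_le_add habs hdist
    _ = 2 * M 3 0 := by ring

/-- Fellow traveling of `M`-Morse geodesics with the same
start point: if `α` passes within `K` of `β`, then `α` and `β` stay `8·M(3,0)`
close up to time `r - K - 4·M(3,0)`; if moreover they share endpoints, then
they stay `12·M(3,0)` close throughout. -/
theorem fellow_traveling (X : Type) [MetricSpace X] (hX : IsGeodesicSpace X)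
    (M : MorseGauge) (s : ℝ) (hs : 0 ≤ s) (α β : ℝ → X)
    (hα : IsGeodesicOn α 0 s) (hβ : IsGeodesicOn β 0 s)
    (hαM : IsMorseOn M α 0 s) (hβM : IsMorseOn M β 0 s)
    (h0 : α 0 = β 0) :
    (∀ r K : ℝ, r ∈ Set.Icc 0 s → 0 < K →
        Metric.infDist (α r) (β '' Set.Icc 0 s) < K →
        ∀ t ∈ Set.Icc 0 s, t < r - K - 4 * M 3 0 →
          dist (α t) (β t) ≤ 8 * M 3 0) ∧
      (α s = β s → ∀ t ∈ Set.Icc 0 s, dist (α t) (β t) ≤ 12 * M 3 0) := by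
  have hM0 : 0 ≤ M 3 0 := morse_nonneg M α s hs hαM
  constructor
  · intro r K hr hK hinf t ht htlt
    -- find a closest point p on β to α r
    have hβc : ContinuousOn β (Set.Icc 0 s) := by
      have : LipschitzOnWith 1 β (Set.Icc 0 s) := by
        apply LipschitzOnWith.of_dist_le_mul
        intro x hx y hy
        rw [hβ x hx y hy]
        simp [Real.dist_eq]
      exact this.continuousOn
    have hcont : ContinuousOn (fun x => dist (α r) (β x)) (Set.Icc 0 s) :=
      (continuous_const.dist continuous_id).comp_continuousOn hβc
    obtain ⟨p, hp, hpmin⟩ := isCompact_Icc.exists_isMinOn ⟨0, le_rfl, hs⟩ hcont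
    have hmin : ∀ x ∈ Set.Icc 0 s, dist (α r) (β p) ≤ dist (α r) (β x) :=
      fun x hx => hpmin hx
    -- dist (α r) (β p) < K
    have hne : (β '' Set.Icc 0 s).Nonempty := ⟨β 0, 0, ⟨le_rfl, hs⟩, rfl⟩
    rw [Metric.infDist_lt_iff hne] at hinf
    obtain ⟨y, hy, hyK⟩ := hinf
    obtain ⟨x, hx, rfl⟩ := hy
    have hDK : dist (α r) (β p) < K := lt_of_le_of_lt (hmin x hx) hyK
    -- p ≥ r - dist (α r) (β p)
    have hrp : r - dist (α r) (β p) ≤ p := by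
      have h1 : dist (α 0) (α r) = r := by
        rw [hα 0 ⟨le_rfl, hs⟩ r hr, abs_of_nonpos (by linarith [hr.1])]; ring
      have h2 : dist (β 0) (β p) = p := by
        rw [hβ 0 ⟨le_rfl, hs⟩ p hp, abs_of_nonpos (by linarith [hp.1])]; ring
      have htri : dist (α 0) (α r) ≤ dist (α 0) (β p) + dist (β p) (α r) :=
        dist_triangle _ _ _
      have h3 : dist (α 0) (β p) = p := by rw [h0]; exact h2
      rw [h1, h3, dist_comm] at htri
      linarith
    have htp : t ≤ p := by linarith
    have := core_lemma hX M s hs α β hα hβ hαM h0 r p hr hp hmin t ht.1 htp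
    linarith
  · intro hend t ht
    have hmin : ∀ x ∈ Set.Icc 0 s, dist (α s) (β s) ≤ dist (α s) (β x) := by
      intro x hx
      rw [hend]
      simpa using dist_nonneg
    have := core_lemma hX M s hs α β hα hβ hαM h0 s s ⟨hs, le_rfl⟩ ⟨hs, le_rfl⟩
      hmin t ht.1 ht.2
    linarith
end

section
/- Let A be a finite totally ordered alphabet and extend the order lexicographically to A*. If Q ⊆ (A × A)* is a regular language over the alphabet A × A, then the language J = { u ∈ A* : (u,v) ∈ Q for some v, and for all w, (u,w) ∈ Q implies u ⪯ w } is a regular language over A. -/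
open Classical

section Aux

variable {A : Type} [LinearOrder A] {σ : Type}

/-- Auxiliary DFA: tracks (1) the state reached by pairing the read word `u` with
itself, (2) the set of states reachable by pairing `u` with arbitrary words, and
(3) the set of states reachable by pairing `u` with lexicographically smaller
words. -/
def lexLeastDFA (M : DFA (A × A) σ) : DFA A (σ × Set σ × Set σ) where
  step := fun p a =>
    (M.step p.1 (a, a),
     { s | ∃ b t, t ∈ p.2.1 ∧ M.step t (a, b) = s },
     { s | (∃ b t, t ∈ p.2.2 ∧ M.step t (a, b) = s) ∨
           (∃ b, b < a ∧ M.step p.1 (a, b) = s) })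
  start := (M.start, {M.start}, ∅)
  accept := { p | (∃ s ∈ p.2.1, s ∈ M.accept) ∧ ∀ s ∈ p.2.2, s ∉ M.accept }

lemma lexLeastDFA_evalFrom (M : DFA (A × A) σ) (u : List A) :
    ∀ (d : σ) (T B : Set σ),
    (lexLeastDFA M).evalFrom (d, T, B) u =
      (M.evalFrom d (u.zip u),
       { s | ∃ v : List A, v.length = u.length ∧ ∃ t ∈ T, M.evalFrom t (u.zip v) = s },
       { s | (∃ w : List A, w.length = u.length ∧ ∃ t ∈ B, M.evalFrom t (u.zip w) = s) ∨
             (∃ w : List A, w.length = u.length ∧ List.Lex (· < ·) w u ∧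
               M.evalFrom d (u.zip w) = s) }) := by
  induction u with
  | nil =>
    intro d T B
    simp only [DFA.evalFrom_nil, List.zip_nil_left]
    refine Prod.ext rfl (Prod.ext ?_ ?_) <;> ext s
    · simp [List.length_eq_zero_iff]
    · simp only [List.length_nil, List.length_eq_zero_iff, Set.mem_setOf_eq]
      constructor
      · intro hs; exact Or.inl ⟨[], rfl, s, hs, rfl⟩
      · rintro (⟨w, rfl, t, ht, rfl⟩ | ⟨w, rfl, hlex, _⟩)
        · simpa using ht
        · exact absurd hlex (by rintro ⟨⟩)
  | cons a u ih =>
    intro d T B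
    have hstep : (lexLeastDFA M).evalFrom (d, T, B) (a :: u) =
        (lexLeastDFA M).evalFrom ((lexLeastDFA M).step (d, T, B) a) u := rfl
    rw [hstep]
    show (lexLeastDFA M).evalFrom (M.step d (a, a), _, _) u = _
    rw [ih]
    refine Prod.ext rfl (Prod.ext ?_ ?_) <;> ext s
    · simp only [Set.mem_setOf_eq]
      constructor
      · rintro ⟨v, hv, t, ⟨b, t0, ht0, rfl⟩, rfl⟩
        exact ⟨b :: v, by simp [hv], t0, ht0, rfl⟩
      · rintro ⟨v, hv, t, ht, rfl⟩
        cases v with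
        | nil => simp at hv
        | cons b v =>
          exact ⟨v, by simpa using hv, M.step t (a, b), ⟨b, t, ht, rfl⟩, rfl⟩
    · simp only [Set.mem_setOf_eq]
      constructor
      · rintro (⟨w, hw, t, (⟨b, t0, ht0, rfl⟩ | ⟨b, hb, rfl⟩), rfl⟩ |
          ⟨w, hw, hlex, rfl⟩)
        · exact Or.inl ⟨b :: w, by simp [hw], t0, ht0, rfl⟩
        · exact Or.inr ⟨b :: w, by simp [hw], List.Lex.rel hb, rfl⟩
        · exact Or.inr ⟨a :: w, by simp [hw], List.Lex.cons hlex, rfl⟩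
      · rintro (⟨w, hw, t, ht, rfl⟩ | ⟨w, hw, hlex, rfl⟩)
        · cases w with
          | nil => simp at hw
          | cons b w =>
            exact Or.inl ⟨w, by simpa using hw, M.step t (a, b),
              Or.inl ⟨b, t, ht, rfl⟩, rfl⟩
        · cases w with
          | nil => simp at hw
          | cons b w =>
            cases hlex with
            | cons h =>
              exact Or.inr ⟨w, by simpa using hw, h, rfl⟩
            | rel h =>
              exact Or.inl ⟨w, by simpa using hw, M.step d (a, b),
                Or.inr ⟨b, h, rfl⟩, rfl⟩

end Aux

/-- For a regular language `Q` over `A × A` (viewed as pairs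
of equal-length words over `A`), the language of words `u` which are paired
with some word by `Q` and are lexicographically least among all words they are
paired with is regular. -/
theorem regular_lex_least (A : Type) [Fintype A] [LinearOrder A]
    (Q : Language (A × A)) (hQ : Q.IsRegular) :
    Language.IsRegular
      ({u : List A |
        (∃ v : List A, v.length = u.length ∧ u.zip v ∈ Q) ∧
        ∀ w : List A, w.length = u.length → u.zip w ∈ Q →
          u = w ∨ List.Lex (· < ·) u w} : Language A) := by
  obtain ⟨σ, hσ, M, hM⟩ := hQ
  refine ⟨σ × Set σ × Set σ, inferInstance, lexLeastDFA M, ?_⟩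
  ext u
  have heval : (lexLeastDFA M).eval u
      = (lexLeastDFA M).evalFrom (M.start, {M.start}, ∅) u := rfl
  rw [DFA.mem_accepts, heval, lexLeastDFA_evalFrom]
  have hmem : ∀ x : List (A × A), x ∈ Q ↔ M.evalFrom M.start x ∈ M.accept := by
    intro x; rw [← hM]; rfl
  constructor
  · rintro ⟨⟨s, ⟨v, hv, t, ht, rfl⟩, hs⟩, h2⟩
    rw [Set.mem_singleton_iff] at ht; subst ht
    refine ⟨⟨v, hv, (hmem _).2 hs⟩, ?_⟩
    intro w hw hwQ
    by_contra hcon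
    push_neg at hcon
    obtain ⟨hne, hnlex⟩ := hcon
    have hlex : List.Lex (· < ·) w u := by
      rcases trichotomous_of (List.Lex (· < ·)) w u with h1 | h1 | h1
      · exact h1
      · exact absurd h1.symm hne
      · exact absurd h1 hnlex
    exact h2 _ (Or.inr ⟨w, hw, hlex, rfl⟩) ((hmem _).1 hwQ)
  · rintro ⟨⟨v, hv, hvQ⟩, h2⟩
    constructor
    · exact ⟨M.evalFrom M.start (u.zip v), ⟨v, hv, M.start, rfl, rfl⟩, (hmem _).1 hvQ⟩
    · rintro s (⟨w, hw, t, ht, rfl⟩ | ⟨w, hw, hlex, rfl⟩) hacc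
      · exact ht.elim
      · rcases h2 w hw ((hmem _).2 hacc) with rfl | hl
        · exact (List.Lex.asymm _).asymm _ _ hlex hlex
        · exact (List.Lex.asymm _).asymm _ _ hlex hl
end

section
/- Let G be a group with finite generating set A, let H ≤ G, and suppose the language L_H of all geodesic words over A representing elements of H is regular and there is a Morse gauge M such that every word of L_H is an M-Morse geodesic word in Cay(G,A). Then H is a stable subgroup: there exist a Morse gauge M and k ≥ 0 such that for every h ∈ H, every geodesic in Cay(G,A) from e to h is M-Morse and contained in the k-neighborhood of H. -/
open Classical

/-- `q : {0,…,n} → G` is a discrete `(k,c)`-quasi-geodesic in the Cayley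
graph of `G` with respect to `π`. -/
noncomputable def IsDiscreteQG {G : Type} [Group G] {A : Type} (π : A → G)
    (k c : ℝ) (q : ℕ → G) (n : ℕ) : Prop :=
  ∀ i ≤ n, ∀ j ≤ n,
    (1 / k) * |(i : ℝ) - (j : ℝ)| - c ≤ (wordDist π (q i) (q j) : ℝ) ∧
    (wordDist π (q i) (q j) : ℝ) ≤ k * |(i : ℝ) - (j : ℝ)| + c

/-- `q : {0,…,n} → G` is a discrete geodesic in the Cayley graph. -/
def IsDiscreteGeodesic {G : Type} [Group G] {A : Type} (π : A → G)
    (q : ℕ → G) (n : ℕ) : Prop :=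
  ∀ i ≤ n, ∀ j ≤ n, wordDist π (q i) (q j) = Nat.dist i j

/-- The discrete path `q : {0,…,n} → G` is `M`-Morse: every discrete
`(k,c)`-quasi-geodesic with endpoints on `q` stays within `M k c` of the
subsegment of `q` between those endpoints. -/
def IsMorsePath {G : Type} [Group G] {A : Type} (π : A → G)
    (M : MorseGauge) (q : ℕ → G) (n : ℕ) : Prop :=
  ∀ k c : ℝ, 1 ≤ k → 0 ≤ c →
    ∀ (p : ℕ → G) (m : ℕ), IsDiscreteQG π k c p m →
      ∀ i j : ℕ, i ≤ j → j ≤ n → p 0 = q i → p m = q j →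
        ∀ l ≤ m, ∃ i' : ℕ, i ≤ i' ∧ i' ≤ j ∧ (wordDist π (p l) (q i') : ℝ) ≤ M k c

/-- The path in the Cayley graph labeled by the word `w`, starting at the
identity: `i ↦` the evaluation of the `i`-th prefix of `w`. -/
def wordPath {G : Type} [Group G] {A : Type} (π : A → G) (w : List A) (i : ℕ) : G :=
  wordEval π (w.take i)

/-- `w` is a geodesic word: its length realizes the word length of the element
it represents. -/
def IsGeodesicWord {G : Type} [Group G] {A : Type} (π : A → G) (w : List A) : Prop :=
  w.length = wordLength π (wordEval π w)

/-- The path labeled by `w` is a `(B; M)`-local Morse geodesic: every subpath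
of length at most `B` is an `M`-Morse (geodesic) path. -/
def IsLocalMorseWord {G : Type} [Group G] {A : Type} (π : A → G)
    (M : MorseGauge) (B : ℝ) (w : List A) : Prop :=
  ∀ i j : ℕ, i ≤ j → j ≤ w.length → (j : ℝ) - (i : ℝ) ≤ B →
    IsMorsePath π M (fun t => wordPath π w (i + t)) (j - i)

/-- `q : {0,…,n} → G` is a `(B; M; k, c)`-local Morse quasi-geodesic. -/
noncomputable def IsLocalMorseQG {G : Type} [Group G] {A : Type} (π : A → G)
    (B : ℝ) (M : MorseGauge) (k c : ℝ) (q : ℕ → G) (n : ℕ) : Prop :=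
  ∀ i j : ℕ, i ≤ j → j ≤ n → (j : ℝ) - (i : ℝ) ≤ B →
    IsDiscreteQG π k c (fun t => q (i + t)) (j - i) ∧
    IsMorsePath π M (fun t => q (i + t)) (j - i)

/-- The Cayley graph of `G` with respect to `π` has the Morse local-to-global
property: local Morse quasi-geodesics of sufficiently large local scale are
global Morse quasi-geodesics. -/
noncomputable def MorseLocalToGlobal {G : Type} [Group G] {A : Type} (π : A → G) : Prop :=
  ∀ (M : MorseGauge) (k c : ℝ), 1 ≤ k → 0 ≤ c →
    ∃ (B : ℝ) (M' : MorseGauge) (k' c' : ℝ), 0 ≤ B ∧ 1 ≤ k' ∧ 0 ≤ c' ∧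
      ∀ (q : ℕ → G) (n : ℕ), IsLocalMorseQG π B M k c q n →
        IsDiscreteQG π k' c' q n ∧ IsMorsePath π M' q n

/-- `H` is `(M,k)`-stable in the Cayley graph of `G` with respect to `π`:
every geodesic word from the identity to an element of `H` is `M`-Morse and
all its vertices lie within distance `k` of `H`. -/
def IsStable {G : Type} [Group G] {A : Type} (π : A → G)
    (H : Subgroup G) (M : MorseGauge) (k : ℕ) : Prop :=
  ∀ h ∈ H, ∀ w : List A, wordEval π w = h → IsGeodesicWord π w →
    IsMorsePath π M (wordPath π w) w.length ∧
    ∀ i ≤ w.length, ∃ h' ∈ H, wordDist π (wordPath π w i) h' ≤ k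

/-- If the language `L_H` of geodesic words representing
elements of `H` is regular and all its words are `M`-Morse, then `H` is a
stable subgroup. -/
theorem stable_of_regular_morse {G : Type} [Group G] {A : Type} [Fintype A]
    (π : A → G) (hgen : Generates π) (hsym : SymmetricGen π)
    (H : Subgroup G) (M : MorseGauge)
    (hreg : Language.IsRegular
      ({w : List A | IsGeodesicWord π w ∧ wordEval π w ∈ H} : Language A))
    (hmorse : ∀ w : List A, IsGeodesicWord π w → wordEval π w ∈ H →
      IsMorsePath π M (wordPath π w) w.length) :
    ∃ (M' : MorseGauge) (k : ℕ), IsStable π H M' k := by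
  obtain ⟨σ, hfin, dfa, hacc⟩ := hreg
  -- For each co-accessible state, pick a witness word to an accept state.
  let P : σ → Prop := fun s => ∃ u : List A, dfa.evalFrom s u ∈ dfa.accept
  let u : σ → List A := fun s => if h : P s then h.choose else []
  have hu : ∀ s, P s → dfa.evalFrom s (u s) ∈ dfa.accept := by
    intro s hs
    simp only [u, dif_pos hs]
    exact hs.choose_spec
  let k : ℕ := Finset.univ.sup (fun s : σ => (u s).length)
  refine ⟨M, k, ?_⟩
  intro h hH w hw hgeo
  have hwH : wordEval π w ∈ H := hw ▸ hH
  refine ⟨hmorse w hgeo hwH, ?_⟩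
  intro i hi
  -- the state reached after reading the first `i` letters
  set s := dfa.evalFrom dfa.start (w.take i) with hs
  have hwL : w ∈ dfa.accepts := by
    rw [hacc]; exact ⟨hgeo, hwH⟩
  have hPs : P s := by
    refine ⟨w.drop i, ?_⟩
    rw [hs, ← DFA.evalFrom_of_append, List.take_append_drop]
    exact hwL
  have hmem : (w.take i ++ u s) ∈ dfa.accepts := by
    rw [DFA.mem_accepts, DFA.eval, DFA.evalFrom_of_append]
    exact hu s hPs
  rw [hacc] at hmem
  refine ⟨wordEval π (w.take i ++ u s), hmem.2, ?_⟩
  have heval : wordEval π (w.take i ++ u s) = wordEval π (w.take i) * wordEval π (u s) := by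
    simp [wordEval, List.prod_append]
  have hdist : wordDist π (wordPath π w i) (wordEval π (w.take i ++ u s))
      = wordLength π (wordEval π (u s)) := by
    rw [wordDist, wordPath, heval]
    group
  rw [hdist]
  calc wordLength π (wordEval π (u s)) ≤ (u s).length :=
        Nat.sInf_le ⟨u s, rfl, rfl⟩
    _ ≤ k := Finset.le_sup (f := fun s => (u s).length) (Finset.mem_univ s)
end
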